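/- If an oriented graph G admits a homomorphism to a consistent sub-orientation of the Kneser graph KG_{a,b}, then for every positive integer c there exists a consistent sub-orientation of KG_{ac,bc} to which G admits a homomorphism. -/
import Mathlib



/-- An oriented graph: a directed graph with no loops and no directed 2-cycles. -/
structure OGraph (V : Type*) where
  adj : V → V → Prop
  irrefl : ∀ v, ¬ adj v v
  asymm : ∀ u v, adj u v → ¬ adj v u

/-- A homomorphism of oriented graphs. -/
def OGraph.Hom {V W : Type*} (G : OGraph V) (H : OGraph W) (f : V → W) : Prop :=
  ∀ u v, G.adj u v → H.adj (f u) (f v)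

/-- `f` is a `b`-fold oriented `k`-coloring of `G`. -/
def IsFoldColoring {V : Type*} (G : OGraph V) (b k : ℕ) (f : V → Finset (Fin k)) : Prop :=
  (∀ v, (f v).card = b) ∧
  (∀ u v, G.adj u v → Disjoint (f u) (f v)) ∧
  (∀ x y z w, G.adj x y → G.adj z w → ¬ Disjoint (f x) (f w) → Disjoint (f y) (f z))

/-- The `b`-fold oriented chromatic number. -/
noncomputable def foldChrom {V : Type*} (G : OGraph V) (b : ℕ) : ℕ :=
  sInf {k | ∃ f : V → Finset (Fin k), IsFoldColoring G b k f}

/-- The fractional oriented chromatic number: the infimum of `k/b` over all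
`b`-fold oriented `k`-colorings. -/
noncomputable def fracChrom {V : Type*} (G : OGraph V) : ℝ :=
  sInf {x : ℝ | ∃ (b k : ℕ) (f : V → Finset (Fin k)),
    0 < b ∧ IsFoldColoring G b k f ∧ x = (k : ℝ) / b}


/-- Vertices of the Kneser graph `KG_{a,b}`: `b`-element subsets of an `a`-element set. -/
def KneserVert (a b : ℕ) := {s : Finset (Fin a) // s.card = b}

/-- A consistent sub-orientation of the Kneser graph `KG_{a,b}`: an orientation of a
subgraph of `KG_{a,b}` such that for any two arcs `x → y` and `w → z`,
`x ∩ z ≠ ∅` implies `y ∩ w = ∅`. -/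
structure ConsistentSubOrientation (a b : ℕ) where
  adj : KneserVert a b → KneserVert a b → Prop
  sub : ∀ x y, adj x y → Disjoint x.val y.val
  consistent : ∀ x y w z, adj x y → adj w z → ¬ Disjoint x.val z.val → Disjoint y.val w.val

theorem stmt2 {V : Type*} (G : OGraph V) (a b : ℕ)
    (K : ConsistentSubOrientation a b) (f : V → KneserVert a b)
    (hf : ∀ u v, G.adj u v → K.adj (f u) (f v)) (c : ℕ) (hc : 0 < c) :
    ∃ (K' : ConsistentSubOrientation (a * c) (b * c)) (g : V → KneserVert (a * c) (b * c)),
      ∀ u v, G.adj u v → K'.adj (g u) (g v) := by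
  classical
  set e := finProdFinEquiv (m := a) (n := c) with he
  set blow : Finset (Fin a) → Finset (Fin (a * c)) :=
    fun s => (s ×ˢ (Finset.univ : Finset (Fin c))).image e with hblow
  have hcard : ∀ s : Finset (Fin a), (blow s).card = s.card * c := by
    intro s
    rw [hblow]
    rw [Finset.card_image_of_injective _ e.injective, Finset.card_product,
      Finset.card_univ, Fintype.card_fin]
  have hdisj : ∀ s t : Finset (Fin a), Disjoint s t ↔ Disjoint (blow s) (blow t) := by
    intro s t
    constructor
    · intro h
      rw [Finset.disjoint_left]
      intro x hx hy
      simp only [hblow, Finset.mem_image, Finset.mem_product] at hx hy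
      obtain ⟨⟨i, j⟩, ⟨hi, _⟩, rfl⟩ := hx
      obtain ⟨⟨i', j'⟩, ⟨hi', _⟩, heq⟩ := hy
      have := e.injective heq
      rw [Prod.mk.injEq] at this
      exact Finset.disjoint_left.mp h hi (this.1 ▸ hi')
    · intro h
      rw [Finset.disjoint_left]
      intro i hi hit
      have h1 : e (i, ⟨0, hc⟩) ∈ blow s := by
        simp only [hblow, Finset.mem_image, Finset.mem_product]
        exact ⟨(i, ⟨0, hc⟩), ⟨hi, Finset.mem_univ _⟩, rfl⟩
      have h2 : e (i, ⟨0, hc⟩) ∈ blow t := by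
        simp only [hblow, Finset.mem_image, Finset.mem_product]
        exact ⟨(i, ⟨0, hc⟩), ⟨hit, Finset.mem_univ _⟩, rfl⟩
      exact Finset.disjoint_left.mp h h1 h2
  let K' : ConsistentSubOrientation (a * c) (b * c) :=
    { adj := fun x y => ∃ x' y', K.adj x' y' ∧ x.val = blow x'.val ∧ y.val = blow y'.val
      sub := by
        rintro x y ⟨x', y', hadj, hx, hy⟩
        rw [hx, hy]
        exact (hdisj _ _).mp (K.sub _ _ hadj)
      consistent := by
        rintro x y w z ⟨x', y', hxy, hx, hy⟩ ⟨w', z', hwz, hw, hz⟩ hnd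
        rw [hx, hz] at hnd
        rw [hy, hw]
        exact (hdisj _ _).mp
          (K.consistent _ _ _ _ hxy hwz (fun hd => hnd ((hdisj _ _).mp hd))) }
  refine ⟨K', fun v => ⟨blow (f v).val, by rw [hcard, (f v).2]⟩, fun u v huv => ?_⟩
  exact ⟨f u, f v, hf u v huv, rfl, rfl⟩
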